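/- arXiv:2401.16318 — 5 statements merged into one kernel-verified Lean document; each statement's English description precedes it below -/
import Mathlib

section
/- Let N be a finite set and v : Set N → ℝ. Define the OR interaction I_or(S) = -∑_{T ⊆ S} (-1)^{|S|-|T|} v(N \ T) for nonempty S, and I_or(∅) = v(∅). Then for every T ⊆ N, v(T) = I_or(∅) + ∑_{S ⊆ N, S ∩ T ≠ ∅} I_or(S). -/
open Finset MeasureTheory

variable {N : Type*} [Fintype N] [DecidableEq N]

noncomputable def Iand (v : Finset N → ℝ) (S : Finset N) : ℝ :=
  ∑ T ∈ S.powerset, (-1 : ℝ) ^ (S.card - T.card) * v T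

noncomputable def Ior (v : Finset N → ℝ) (S : Finset N) : ℝ :=
  if S = ∅ then v ∅
  else -∑ T ∈ S.powerset, (-1 : ℝ) ^ (S.card - T.card) * v (Finset.univ \ T)
lemma inner_sum_aux (A U : Finset N) (hU : U ∈ A.powerset) :
    ∑ S ∈ A.powerset.filter (fun S => U ⊆ S), ((-1 : ℝ) ^ (S.card - U.card)) =
      if U = A then 1 else 0 := by
  rw [mem_powerset] at hU
  rw [show A.powerset.filter (fun S => U ⊆ S) = (A \ U).powerset.image (fun V => V ∪ U) by
    ext S
    simp only [mem_filter, mem_powerset, mem_image]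
    constructor
    · rintro ⟨hSA, hUS⟩
      exact ⟨S \ U, sdiff_subset_sdiff hSA le_rfl, by rw [sdiff_union_of_subset hUS]⟩
    · rintro ⟨V, hV, rfl⟩
      rw [subset_sdiff] at hV
      exact ⟨union_subset hV.1 hU, subset_union_right⟩]
  rw [Finset.sum_image (by
    intro x hx y hy h
    rw [mem_coe, mem_powerset, subset_sdiff] at hx hy
    have : ∀ a b : Finset N, a ∪ U = b ∪ U → Disjoint a U → a ⊆ b := by
      intro a b hab hd
      intro z hz
      have : z ∈ b ∪ U := hab ▸ mem_union_left _ hz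
      rcases mem_union.1 this with h' | h'
      · exact h'
      · exact absurd (hd.forall_ne_finset hz h') (by simp)
    exact subset_antisymm (this _ _ h hx.2) (this _ _ h.symm hy.2))]
  have hcard : ∀ V ∈ (A \ U).powerset, (V ∪ U).card - U.card = V.card := by
    intro V hV
    rw [mem_powerset, subset_sdiff] at hV
    rw [card_union_of_disjoint hV.2, Nat.add_sub_cancel]
  rw [Finset.sum_congr rfl (fun V hV => by rw [hcard V hV])]
  have hz : ∑ V ∈ (A \ U).powerset, ((-1 : ℝ)) ^ V.card
      = ((∑ V ∈ (A \ U).powerset, (-1 : ℤ) ^ V.card : ℤ) : ℝ) := by push_cast; rfl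
  rw [hz, Finset.sum_powerset_neg_one_pow_card]
  by_cases h : U = A
  · subst h; simp
  · rw [if_neg h, if_neg (fun hAU => h (subset_antisymm hU
      (sdiff_eq_empty_iff_subset.mp hAU)))]
    simp

lemma mobius_aux (w : Finset N → ℝ) (A : Finset N) :
    ∑ S ∈ A.powerset, Iand w S = w A := by
  unfold Iand
  rw [Finset.sum_comm' (t' := A.powerset)
    (s' := fun U => A.powerset.filter (fun S => U ⊆ S))
    (by
      intro S U
      simp only [mem_powerset, mem_filter, mem_powerset]
      constructor
      · rintro ⟨h1, h2⟩
        exact ⟨⟨h1, h2⟩, h2.trans h1⟩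
      · rintro ⟨⟨h1, h2⟩, _⟩
        exact ⟨h1, h2⟩)]
  have : ∀ U ∈ A.powerset,
      ∑ S ∈ A.powerset.filter (fun S => U ⊆ S), (-1 : ℝ) ^ (S.card - U.card) * w U
        = (if U = A then 1 else 0) * w U := by
    intro U hU
    rw [← Finset.sum_mul, inner_sum_aux A U hU]
  rw [Finset.sum_congr rfl this]
  simp

theorem or_universal_matching (v : Finset N → ℝ) (T : Finset N) :
    v T = Ior v ∅ +
      ∑ S ∈ Finset.univ.powerset.filter (fun S => (S ∩ T).Nonempty), Ior v S := by
  set w : Finset N → ℝ := fun U => v (Finset.univ \ U) with hw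
  have h0 : Ior v ∅ = ∑ S ∈ (Finset.univ : Finset N).powerset, Iand w S := by
    rw [mobius_aux]; simp [Ior, hw]
  have h1 : ∀ S : Finset N, (S ∩ T).Nonempty → Ior v S = -Iand w S := by
    intro S hS
    have hne : S ≠ ∅ := by
      rintro rfl; simp at hS
    simp [Ior, Iand, hne, hw]
  rw [h0, Finset.sum_congr rfl (fun S hS => h1 S (by simpa using (mem_filter.1 hS).2))]
  rw [← Finset.sum_filter_add_sum_filter_not (Finset.univ : Finset N).powerset
    (fun S => (S ∩ T).Nonempty) (Iand w)]
  rw [show (Finset.univ : Finset N).powerset.filter (fun S => ¬(S ∩ T).Nonempty)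
      = (Finset.univ \ T).powerset by
    ext S
    simp [subset_sdiff, not_nonempty_iff_eq_empty, disjoint_iff_inter_eq_empty]]
  rw [mobius_aux]
  simp [hw, sdiff_sdiff_right_self, inf_eq_inter, Finset.univ_inter]
end

section
/- Let N be a finite set and suppose v = v_and + v_or, where v_and, v_or : Set N → ℝ. Then for every T ⊆ N, v(T) = ∑_{S ⊆ T} I_and(S) + I_or(∅) + ∑_{S ∩ T ≠ ∅} I_or(S), where I_and is the AND interaction of v_and and I_or is the OR interaction of v_or. -/
open Finset MeasureTheory

variable {N : Type*} [Fintype N] [DecidableEq N]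

lemma sum_Iand_powerset (f : Finset N → ℝ) (A : Finset N) :
    ∑ S ∈ A.powerset, Iand f S = f A := by
  unfold Iand
  have h1 : ∀ S ∈ A.powerset, ∑ U ∈ S.powerset, (-1 : ℝ) ^ (S.card - U.card) * f U
      = ∑ U ∈ A.powerset, if U ⊆ S then (-1 : ℝ) ^ (S.card - U.card) * f U else 0 := by
    intro S hS
    rw [mem_powerset] at hS
    rw [← Finset.sum_filter]
    congr 1
    ext U
    simp only [mem_filter, mem_powerset]
    exact ⟨fun h => ⟨h.trans hS, h⟩, fun h => h.2⟩
  rw [Finset.sum_congr rfl h1, Finset.sum_comm]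
  have h2 : ∀ U ∈ A.powerset,
      (∑ S ∈ A.powerset, if U ⊆ S then (-1 : ℝ) ^ (S.card - U.card) * f U else 0)
      = (if U = A then 1 else 0) * f U := by
    intro U hU
    rw [mem_powerset] at hU
    have : (∑ S ∈ A.powerset, if U ⊆ S then (-1 : ℝ) ^ (S.card - U.card) * f U else 0)
        = (∑ S ∈ A.powerset.filter (fun S => U ⊆ S), (-1 : ℝ) ^ (S.card - U.card)) * f U := by
      rw [Finset.sum_filter, Finset.sum_mul]
      congr 1; ext S
      split <;> simp
    rw [this]
    congr 1
    have hb : (∑ S ∈ A.powerset.filter (fun S => U ⊆ S), (-1 : ℝ) ^ (S.card - U.card))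
        = ∑ R ∈ (A \ U).powerset, (-1 : ℝ) ^ R.card := by
      apply Finset.sum_nbij' (i := fun S => S \ U) (j := fun R => R ∪ U)
      · intro S hS
        simp only [mem_filter, mem_powerset] at hS
        exact mem_powerset.2 (sdiff_subset_sdiff hS.1 (Finset.Subset.refl U))
      · intro R hR
        rw [mem_powerset] at hR
        simp only [mem_filter, mem_powerset]
        constructor
        · exact Finset.union_subset (hR.trans Finset.sdiff_subset) hU
        · exact Finset.subset_union_right
      · intro S hS
        simp only [mem_filter, mem_powerset] at hS
        exact Finset.sdiff_union_of_subset hS.2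
      · intro R hR
        rw [mem_powerset, Finset.subset_sdiff] at hR
        rw [Finset.union_sdiff_cancel_right hR.2]
      · intro S hS
        simp only [mem_filter, mem_powerset] at hS
        rw [Finset.card_sdiff_of_subset hS.2]
    rw [hb]
    have hc : (∑ R ∈ (A \ U).powerset, (-1 : ℝ) ^ R.card)
        = ((∑ R ∈ (A \ U).powerset, (-1 : ℤ) ^ R.card : ℤ) : ℝ) := by push_cast; rfl
    rw [hc, Finset.sum_powerset_neg_one_pow_card]
    have he : A \ U = ∅ ↔ U = A := by
      rw [Finset.sdiff_eq_empty_iff_subset]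
      exact ⟨fun h => Finset.Subset.antisymm hU h, fun h => h ▸ Finset.Subset.refl A⟩
    by_cases h : U = A <;> simp [he, h]
  rw [Finset.sum_congr rfl h2]
  simp only [ite_mul, one_mul, zero_mul]
  rw [Finset.sum_ite_eq' A.powerset A f]
  simp

theorem and_or_universal_matching (v vand vor : Finset N → ℝ)
    (hdecomp : ∀ T, v T = vand T + vor T) (T : Finset N) :
    v T = (∑ S ∈ T.powerset, Iand vand S) + Ior vor ∅ +
      ∑ S ∈ Finset.univ.powerset.filter (fun S => (S ∩ T).Nonempty), Ior vor S := by
  set w : Finset N → ℝ := fun U => vor (Finset.univ \ U) with hw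
  have hand : ∑ S ∈ T.powerset, Iand vand S = vand T := sum_Iand_powerset _ _
  have hor0 : Ior vor ∅ = vor ∅ := by simp [Ior]
  have horS : ∀ S ∈ Finset.univ.powerset.filter (fun S => (S ∩ T).Nonempty),
      Ior vor S = - Iand w S := by
    intro S hS
    simp only [mem_filter] at hS
    have hne : S ≠ ∅ := by
      rcases hS.2 with ⟨x, hx⟩
      exact Finset.ne_empty_of_mem (Finset.mem_of_mem_inter_left hx)
    simp [Ior, Iand, hne, hw]
  rw [Finset.sum_congr rfl horS, Finset.sum_neg_distrib]
  have hsplit : ∑ S ∈ Finset.univ.powerset.filter (fun S => (S ∩ T).Nonempty), Iand w S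
      + ∑ S ∈ Finset.univ.powerset.filter (fun S => ¬ (S ∩ T).Nonempty), Iand w S
      = ∑ S ∈ (Finset.univ : Finset N).powerset, Iand w S :=
    Finset.sum_filter_add_sum_filter_not _ _ _
  have hfilt : Finset.univ.powerset.filter (fun S => ¬ (S ∩ T).Nonempty)
      = ((Finset.univ : Finset N) \ T).powerset := by
    ext S
    simp only [mem_filter, mem_powerset, Finset.not_nonempty_iff_eq_empty,
      Finset.subset_sdiff, ← Finset.disjoint_iff_inter_eq_empty]
  rw [hfilt] at hsplit
  rw [sum_Iand_powerset, sum_Iand_powerset] at hsplit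
  have hw1 : w Finset.univ = vor ∅ := by simp [hw]
  have hw2 : w (Finset.univ \ T) = vor T := by
    simp [hw, Finset.sdiff_sdiff_self_left]
  rw [hw1, hw2] at hsplit
  have : ∑ S ∈ Finset.univ.powerset.filter (fun S => (S ∩ T).Nonempty), Iand w S
      = vor ∅ - vor T := by linarith
  rw [hand, hor0, this, hdecomp T]
  ring
end

section
/- Let N be a finite set and v : Set N → ℝ. For any choice of real numbers (γ_T)_{T ⊆ N}, define v_and(T) = 0.5·v(T) + γ_T and v_or(T) = 0.5·v(T) − γ_T. Then v_and(T) + v_or(T) = v(T) for all T, and consequently for every T ⊆ N, v(T) = ∑_{S ⊆ T} I_and(S) + I_or(∅) + ∑_{S ∩ T ≠ ∅} I_or(S), where I_and is the AND interaction of v_and and I_or the OR interaction of v_or. -/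
open Finset MeasureTheory

variable {N : Type*} [Fintype N] [DecidableEq N]

lemma moebius (u : Finset N → ℝ) (T : Finset N) :
    ∑ S ∈ T.powerset, Iand u S = u T := by
  unfold Iand
  have h1 : ∀ S ∈ T.powerset, (∑ L ∈ S.powerset, (-1 : ℝ) ^ (S.card - L.card) * u L)
      = ∑ L ∈ T.powerset, if L ⊆ S then (-1 : ℝ) ^ (S.card - L.card) * u L else 0 := by
    intro S hS
    rw [Finset.mem_powerset] at hS
    rw [← Finset.sum_filter]
    congr 1
    ext L
    simp only [Finset.mem_filter, Finset.mem_powerset]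
    exact ⟨fun h => ⟨h.trans hS, h⟩, fun h => h.2⟩
  rw [Finset.sum_congr rfl h1, Finset.sum_comm]
  have h2 : ∀ L ∈ T.powerset,
      (∑ S ∈ T.powerset, if L ⊆ S then (-1 : ℝ) ^ (S.card - L.card) * u L else 0)
      = (if L = T then 1 else 0) * u L := by
    intro L hL
    rw [Finset.mem_powerset] at hL
    rw [← Finset.sum_filter]
    have key : (∑ S ∈ T.powerset.filter (fun S => L ⊆ S), (-1 : ℝ) ^ (S.card - L.card))
        = ∑ M ∈ (T \ L).powerset, (-1 : ℝ) ^ M.card := by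
      apply Finset.sum_bij' (fun S _ => S \ L) (fun M _ => M ∪ L)
      · intro S hS
        simp only [Finset.mem_filter, Finset.mem_powerset] at hS
        simp only [Finset.mem_powerset]
        exact Finset.sdiff_subset_sdiff hS.1 le_rfl
      · intro M hM
        simp only [Finset.mem_powerset] at hM
        simp only [Finset.mem_filter, Finset.mem_powerset]
        constructor
        · exact Finset.union_subset (hM.trans (Finset.sdiff_subset)) hL
        · exact Finset.subset_union_right
      · intro S hS
        simp only [Finset.mem_filter, Finset.mem_powerset] at hS
        exact Finset.sdiff_union_of_subset hS.2
      · intro M hM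
        simp only [Finset.mem_powerset] at hM
        rw [Finset.union_sdiff_right]
        exact Finset.sdiff_eq_self_of_disjoint (Finset.disjoint_of_subset_left hM Finset.sdiff_disjoint)
      · intro S hS
        simp only [Finset.mem_filter, Finset.mem_powerset] at hS
        rw [Finset.card_sdiff_of_subset hS.2]
    have key2 : (∑ M ∈ (T \ L).powerset, (-1 : ℝ) ^ M.card)
        = if T \ L = ∅ then 1 else 0 := by
      have h := Finset.sum_powerset_neg_one_pow_card (x := T \ L)
      have := congrArg (fun z : ℤ => (z : ℝ)) h
      push_cast at this
      simpa using this
    rw [← Finset.sum_mul, key, key2]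
    congr 1
    by_cases h : L = T
    · simp [h]
    · have : T \ L ≠ ∅ := by
        intro he
        exact h (le_antisymm hL (Finset.sdiff_eq_empty_iff_subset.mp he))
      simp [this, h]
  rw [Finset.sum_congr rfl h2]
  simp [ite_mul, Finset.sum_ite_eq' T.powerset T]

theorem gamma_decomposition_universal_matching (v : Finset N → ℝ) (γ : Finset N → ℝ) :
    (∀ T : Finset N, (0.5 * v T + γ T) + (0.5 * v T - γ T) = v T) ∧
    (∀ T : Finset N,
      v T = (∑ S ∈ T.powerset, Iand (fun L => 0.5 * v L + γ L) S) +
        Ior (fun L => 0.5 * v L - γ L) ∅ +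
        ∑ S ∈ Finset.univ.powerset.filter (fun S => (S ∩ T).Nonempty),
          Ior (fun L => 0.5 * v L - γ L) S) := by
  constructor
  · intro T; ring
  · intro T
    set w1 : Finset N → ℝ := fun L => 0.5 * v L + γ L with hw1
    set w2 : Finset N → ℝ := fun L => 0.5 * v L - γ L with hw2
    set u : Finset N → ℝ := fun L => w2 (Finset.univ \ L) with hu
    have hand : ∑ S ∈ T.powerset, Iand w1 S = w1 T := moebius w1 T
    have hior0 : Ior w2 ∅ = w2 ∅ := by simp [Ior]
    have hall : ∑ S ∈ (Finset.univ : Finset N).powerset, Iand u S = u Finset.univ :=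
      moebius u Finset.univ
    have hsub : ∑ S ∈ (Finset.univ \ T).powerset, Iand u S = u (Finset.univ \ T) :=
      moebius u (Finset.univ \ T)
    have hfe : (Finset.univ : Finset N).powerset.filter (fun S => ¬ (S ∩ T).Nonempty)
        = (Finset.univ \ T).powerset := by
      ext S
      simp only [Finset.mem_filter, Finset.mem_powerset, Finset.not_nonempty_iff_eq_empty,
        Finset.subset_sdiff, ← Finset.disjoint_iff_inter_eq_empty]
    have hsplit := Finset.sum_filter_add_sum_filter_not (Finset.univ : Finset N).powerset
      (fun S => (S ∩ T).Nonempty) (Iand u)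
    rw [hfe, hsub] at hsplit
    have hIor : ∀ S ∈ (Finset.univ : Finset N).powerset.filter (fun S => (S ∩ T).Nonempty),
        Ior w2 S = - Iand u S := by
      intro S hS
      simp only [Finset.mem_filter] at hS
      have hne : S ≠ ∅ := by
        intro he
        simp [he] at hS
      rw [Ior, if_neg hne]
      rfl
    rw [Finset.sum_congr rfl hIor, Finset.sum_neg_distrib]
    have huuniv : u Finset.univ = w2 ∅ := by simp [hu]
    have huT : u (Finset.univ \ T) = w2 T := by simp [hu]
    rw [huuniv] at hall
    rw [huT] at hsplit
    have : ∑ S ∈ (Finset.univ : Finset N).powerset.filter (fun S => (S ∩ T).Nonempty), Iand u S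
        = w2 ∅ - w2 T := by
      rw [hall] at hsplit
      linarith
    rw [hand, hior0, this]
    simp only [hw1, hw2]
    ring
end

section
/- Let N be a finite set and v : Set N → ℝ. For i ∈ N, the sum of all AND interactions of subsets containing i, each divided by its cardinality, sums over i to v(N) − v(∅): ∑_{i ∈ N} ∑_{S ∋ i} I_and(S)/|S| = v(N) − v(∅). -/
open Finset MeasureTheory

variable {N : Type*} [Fintype N] [DecidableEq N]

omit [Fintype N] in
lemma sum_neg_one_pow_real {x : Finset N} :
    (∑ m ∈ x.powerset, (-1 : ℝ) ^ m.card) = if x = ∅ then 1 else 0 := by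
  have := Finset.sum_powerset_neg_one_pow_card (x := x)
  have h : ((∑ m ∈ x.powerset, (-1 : ℤ) ^ m.card : ℤ) : ℝ)
      = ∑ m ∈ x.powerset, (-1 : ℝ) ^ m.card := by push_cast; ring_nf
  rw [← h, this]
  split <;> norm_num

lemma sum_Iand (v : Finset N → ℝ) :
    ∑ S ∈ (Finset.univ : Finset N).powerset, Iand v S = v Finset.univ := by
  unfold Iand
  rw [Finset.sum_comm' (s' := fun T => Finset.univ.powerset.filter (fun S => T ⊆ S))
    (t' := (Finset.univ : Finset N).powerset)
    (by intro S T; simp [Finset.subset_iff] at *)]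
  have key : ∀ T ∈ (Finset.univ : Finset N).powerset,
      (∑ S ∈ Finset.univ.powerset.filter (fun S => T ⊆ S), (-1 : ℝ) ^ (S.card - T.card) * v T)
      = if T = Finset.univ then v T else 0 := by
    intro T _
    have : (∑ S ∈ Finset.univ.powerset.filter (fun S => T ⊆ S),
        (-1 : ℝ) ^ (S.card - T.card)) = ∑ U ∈ (Finset.univ \ T).powerset, (-1 : ℝ) ^ U.card := by
      apply Finset.sum_nbij' (i := fun S => S \ T) (j := fun U => U ∪ T)
      · intro S hS
        simp only [mem_filter, mem_powerset] at hS
        simp [Finset.sdiff_subset_sdiff hS.1 (le_refl T)]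
      · intro U hU
        simp only [mem_powerset] at hU ⊢
        simp only [mem_filter, mem_powerset]
        exact ⟨Finset.subset_univ _, Finset.subset_union_right⟩
      · intro S hS
        simp only [mem_filter, mem_powerset] at hS
        exact Finset.sdiff_union_of_subset hS.2
      · intro U hU
        simp only [mem_powerset] at hU
        have : Disjoint U T := Finset.disjoint_of_subset_left hU (Finset.sdiff_disjoint)
        rw [Finset.union_sdiff_cancel_right this]
      · intro S hS
        simp only [mem_filter, mem_powerset] at hS
        congr 1
        rw [Finset.card_sdiff_of_subset hS.2]
    rw [← Finset.sum_mul, this, sum_neg_one_pow_real]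
    by_cases h : T = Finset.univ
    · simp [h]
    · have : Finset.univ \ T ≠ ∅ := by
        intro he
        exact h (Finset.eq_univ_of_forall fun x => by
          by_contra hx
          exact (Finset.eq_empty_iff_forall_notMem.mp he x) (by simp [hx]))
      simp [this, h]
  rw [Finset.sum_congr rfl key, Finset.sum_ite_eq' _ Finset.univ]
  simp

theorem shapley_efficiency_via_dividends (v : Finset N → ℝ) :
    ∑ i ∈ (Finset.univ : Finset N),
      ∑ S ∈ Finset.univ.powerset.filter (fun S => i ∈ S), Iand v S / S.card
    = v Finset.univ - v ∅ := by
  rw [Finset.sum_comm' (s' := fun S => S) (t' := (Finset.univ : Finset N).powerset)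
    (by intro i S; simp)]
  have : ∀ S ∈ (Finset.univ : Finset N).powerset,
      (∑ _i ∈ S, Iand v S / S.card) = Iand v S - (if S = ∅ then Iand v S else 0) := by
    intro S _
    rw [Finset.sum_const, nsmul_eq_mul]
    by_cases h : S = ∅
    · simp [h]
    · have hc : (S.card : ℝ) ≠ 0 := by
        simp [Finset.card_eq_zero, h]
      field_simp
      simp [h]
  rw [Finset.sum_congr rfl this, Finset.sum_sub_distrib, sum_Iand,
    Finset.sum_ite_eq' _ ∅]
  have : Iand v ∅ = v ∅ := by simp [Iand]
  simp [this]
end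

section
/- Let N be a finite set and v : Set N → ℝ such that I_and(S) = 0 for all S with |S| ≥ 2. Then v is additive on disjoint increments: for all T ⊆ N, v(T) = v(∅) + ∑_{i ∈ T} (v({i}) − v(∅)). -/
open Finset MeasureTheory

variable {N : Type*} [Fintype N] [DecidableEq N]

lemma Iand_inner_sum (T U : Finset N) (hU : U ∈ T.powerset) :
    ∑ S ∈ T.powerset.filter (fun S => U ⊆ S), ((-1 : ℝ) ^ (S.card - U.card)) =
      if U = T then 1 else 0 := by
  rw [mem_powerset] at hU
  have key : ∑ S ∈ T.powerset.filter (fun S => U ⊆ S), ((-1 : ℝ) ^ (S.card - U.card)) =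
      ∑ W ∈ (T \ U).powerset, ((-1 : ℝ) ^ W.card) := by
    refine Finset.sum_bij' (fun S _ => S \ U) (fun W _ => W ∪ U) ?_ ?_ ?_ ?_ ?_
    · intro S hS
      simp only [mem_filter, mem_powerset] at hS
      exact mem_powerset.2 (sdiff_subset_sdiff hS.1 le_rfl)
    · intro W hW
      simp only [mem_powerset] at hW
      refine mem_filter.2 ⟨mem_powerset.2 (union_subset (hW.trans sdiff_subset) hU), subset_union_right⟩
    · intro S hS
      simp only [mem_filter, mem_powerset] at hS
      exact sdiff_union_of_subset hS.2
    · intro W hW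
      simp only [mem_powerset] at hW
      have hd : Disjoint W U := Finset.disjoint_of_subset_left hW sdiff_disjoint
      show (W ∪ U) \ U = W
      rw [union_sdiff_right, sdiff_eq_self_of_disjoint hd]
    · intro S hS
      simp only [mem_filter, mem_powerset] at hS
      rw [card_sdiff_of_subset hS.2]
  rw [key]
  have := @Finset.sum_powerset_neg_one_pow_card _ _ (T \ U)
  have h2 : ((∑ m ∈ (T \ U).powerset, (-1 : ℤ) ^ m.card : ℤ) : ℝ) =
      ∑ W ∈ (T \ U).powerset, ((-1 : ℝ) ^ W.card) := by push_cast; ring_nf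
  rw [← h2, this]
  have : T \ U = ∅ ↔ U = T := by
    rw [sdiff_eq_empty_iff_subset]
    exact ⟨fun h => subset_antisymm hU h, fun h => h ▸ le_rfl⟩
  split_ifs with h1 h3 h3 <;> simp_all

lemma Iand_inversion (v : Finset N → ℝ) (T : Finset N) :
    ∑ S ∈ T.powerset, Iand v S = v T := by
  unfold Iand
  rw [Finset.sum_comm' (t' := T.powerset)
    (s' := fun U => T.powerset.filter (fun S => U ⊆ S)) (fun S U => by
      simp only [mem_powerset, mem_filter]
      constructor
      · rintro ⟨h1, h2⟩; exact ⟨⟨h1, h2⟩, h2.trans h1⟩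
      · rintro ⟨⟨h1, h2⟩, h3⟩; exact ⟨h1, h2⟩)]
  rw [Finset.sum_congr rfl (fun U hU => by
      rw [← Finset.sum_mul, Iand_inner_sum T U hU])]
  simp only [ite_mul, one_mul, zero_mul]
  rw [Finset.sum_ite_eq' T.powerset T v, if_pos (mem_powerset.2 le_rfl)]

theorem no_high_order_interactions_additive (v : Finset N → ℝ)
    (h : ∀ S : Finset N, 2 ≤ S.card → Iand v S = 0) :
    ∀ T : Finset N, v T = v ∅ + ∑ i ∈ T, (v {i} - v ∅) := by
  intro T
  have key := Iand_inversion v T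
  rw [← key]
  rw [← Finset.sum_filter_add_sum_filter_not T.powerset (fun S => S.card ≤ 1)]
  have h2 : ∑ S ∈ T.powerset.filter (fun S => ¬ S.card ≤ 1), Iand v S = 0 := by
    refine Finset.sum_eq_zero fun S hS => ?_
    simp only [mem_filter, not_le] at hS
    exact h S hS.2
  rw [h2, add_zero]
  have h3 : T.powerset.filter (fun S => S.card ≤ 1) = insert ∅ (T.image (fun i => {i})) := by
    ext S
    simp only [mem_filter, mem_powerset, mem_insert, mem_image]
    constructor
    · rintro ⟨hST, hc⟩
      interval_cases hcard : S.card
      · left; exact card_eq_zero.1 hcard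
      · right; obtain ⟨i, hi⟩ := card_eq_one.1 hcard
        exact ⟨i, hST (hi ▸ mem_singleton_self i), hi.symm⟩
    · rintro (rfl | ⟨i, hi, rfl⟩)
      · simp
      · simp [singleton_subset_iff, hi]
  rw [h3, Finset.sum_insert (by simp), Finset.sum_image (by simp)]
  have he : Iand v ∅ = v ∅ := by simp [Iand]
  have hs : ∀ i : N, Iand v {i} = v {i} - v ∅ := by
    intro i
    rw [Iand, show ({i} : Finset N) = insert i ∅ from rfl,
      Finset.sum_powerset_insert (notMem_empty i)]
    simp
    ring
  rw [he]
  congr 1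
  exact Finset.sum_congr rfl fun i _ => hs i
end
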